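/- Assume μ1 = μ2 = μ > 0 and −1 < ρ < 0. Then inf_{(t,s)∈(0,∞)²} g(t,s) = 8(1−ρ)·μ, and this infimum is attained exactly at the two points ((1−2ρ)/μ, 1/((1−2ρ)·μ)) and (1/((1−2ρ)·μ), (1−2ρ)/μ), and at no other point of (0,∞)². -/

import Mathlib

open Matrix

/-- Covariance matrix `Σ_{ts}` of `(X₁(t), X₂(s))` for a correlated Brownian motion with
correlation `ρ`. -/
noncomputable def covM (ρ t s : ℝ) : Matrix (Fin 2) (Fin 2) ℝ :=
  !![t, ρ * min t s; ρ * min t s, s]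

/-- `g(t,s) = inf { (x,y) Σ_{ts}⁻¹ (x,y)ᵀ : x ≥ 1 + μ₁ t, y ≥ 1 + μ₂ s }`. -/
noncomputable def gfun (ρ μ1 μ2 t s : ℝ) : ℝ :=
  sInf {v : ℝ | ∃ x y : ℝ, 1 + μ1 * t ≤ x ∧ 1 + μ2 * s ≤ y ∧
    v = ![x, y] ⬝ᵥ ((covM ρ t s)⁻¹ *ᵥ ![x, y])}

lemma quadform (ρ t s x y : ℝ) (ht : 0 < t) (hs : 0 < s) (hρ : ρ^2 < 1) :
    ![x, y] ⬝ᵥ ((covM ρ t s)⁻¹ *ᵥ ![x, y]) =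
      (s*x^2 - 2*ρ*(min t s)*x*y + t*y^2) / (t*s - ρ^2*(min t s)^2) := by
  set m := min t s with hm
  have hm0 : 0 < m := lt_min ht hs
  have hmt : m ≤ t := min_le_left _ _
  have hms : m ≤ s := min_le_right _ _
  have hd : 0 < t*s - ρ^2*m^2 := by nlinarith [sq_nonneg ρ, mul_pos hm0 hm0]
  have hdet : (covM ρ t s).det = t*s - ρ^2*m^2 := by
    simp [covM, Matrix.det_fin_two_of]; ring
  have hinv : (covM ρ t s)⁻¹ = (t*s - ρ^2*m^2)⁻¹ • !![s, -(ρ*m); -(ρ*m), t] := by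
    rw [Matrix.inv_def, hdet, Ring.inverse_eq_inv']
    congr 1
    rw [covM, Matrix.adjugate_fin_two]
    norm_num
    exact Or.inl hm.symm
  rw [hinv]
  simp [Matrix.mulVec, dotProduct, Fin.sum_univ_two, Matrix.smul_apply, smul_eq_mul]
  field_simp
  ring

lemma gval (ρ μ t s : ℝ) (ht : 0 < t) (hs : 0 < s) (hρl : -1 < ρ) (hρu : ρ < 0)
    (hμ : 0 < μ) :
    gfun ρ μ μ t s =
      (s*(1+μ*t)^2 - 2*ρ*(min t s)*(1+μ*t)*(1+μ*s) + t*(1+μ*s)^2)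
        / (t*s - ρ^2*(min t s)^2) := by
  have hρ2 : ρ^2 < 1 := by nlinarith
  set m := min t s with hm
  have hm0 : 0 < m := lt_min ht hs
  have hmt : m ≤ t := min_le_left _ _
  have hms : m ≤ s := min_le_right _ _
  have hd : 0 < t*s - ρ^2*m^2 := by nlinarith [sq_nonneg ρ, mul_pos hm0 hm0]
  have ha : (0:ℝ) < 1 + μ*t := by nlinarith
  have hb : (0:ℝ) < 1 + μ*s := by nlinarith
  apply IsLeast.csInf_eq
  constructor
  · exact ⟨1+μ*t, 1+μ*s, le_refl _, le_refl _, by rw [quadform ρ t s _ _ ht hs hρ2]⟩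
  · rintro v ⟨x, y, hx, hy, rfl⟩
    rw [quadform ρ t s _ _ ht hs hρ2]
    rw [div_le_div_iff₀ hd hd]
    have hx0 : 0 < x := lt_of_lt_of_le ha hx
    have hy0 : 0 < y := lt_of_lt_of_le hb hy
    have h1 : (1+μ*t)^2 ≤ x^2 := by nlinarith
    have h2 : (1+μ*s)^2 ≤ y^2 := by nlinarith
    have h3 : (1+μ*t)*(1+μ*s) ≤ x*y := by nlinarith
    nlinarith [mul_le_mul_of_nonneg_left h1 hs.le, mul_le_mul_of_nonneg_left h2 ht.le,
      mul_le_mul_of_nonneg_left h3 (mul_nonneg (by linarith : (0:ℝ) ≤ -2*ρ) hm0.le), hd.le]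

lemma gsymm (ρ μ t s : ℝ) (ht : 0 < t) (hs : 0 < s) (hρl : -1 < ρ) (hρu : ρ < 0)
    (hμ : 0 < μ) : gfun ρ μ μ t s = gfun ρ μ μ s t := by
  rw [gval ρ μ t s ht hs hρl hρu hμ, gval ρ μ s t hs ht hρl hρu hμ, min_comm s t]
  ring_nf

lemma Hineq (c x y : ℝ) (hc1 : 1 < c) (hx : 0 < x) (hy : 0 < y) :
    0 ≤ c*x + y + c*x^2*y + x*y^2 - (1+3*c)*x*y + (c-1)*y^2 := by
  have hc0 : 0 < c := by linarith
  rcases le_or_gt ((c-1)^2) (4*c*y*(x+c-1)) with hK | hK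
  · nlinarith [sq_nonneg (2*c*y*(x-1) - (c-1)*(y-1)), mul_nonneg (by linarith : (0:ℝ) ≤ 4*c*y*(x+c-1) - (c-1)^2) (sq_nonneg (y-1)), mul_pos hc0 hy]
  · have h1 : 4*c*y ≤ c - 1 := by nlinarith [mul_pos hc0 hy]
    nlinarith [mul_nonneg (mul_nonneg (by linarith : (0:ℝ) ≤ c - 1 - 4*c*y) hx.le) (by linarith : (0:ℝ) ≤ 1+3*c), sq_nonneg (c+1), mul_pos hx hy, mul_pos (mul_pos hc0 hx) hx, mul_pos hc0 hy, mul_pos (mul_pos (mul_pos hc0 hx) hx) hy, mul_pos (mul_pos hx hy) hy, mul_pos hx (by positivity : (0:ℝ) < (c+1)^2)]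

lemma Heq (c x y : ℝ) (hc1 : 1 < c) (hx : 0 < x) (hy : 0 < y)
    (hH : c*x + y + c*x^2*y + x*y^2 - (1+3*c)*x*y + (c-1)*y^2 = 0) :
    x = 1 ∧ y = 1 := by
  have hc0 : 0 < c := by linarith
  rcases le_or_gt ((c-1)^2) (4*c*y*(x+c-1)) with hK | hK
  · have hKeq : (2*c*y*(x-1) - (c-1)*(y-1))^2 + (4*c*y*(x+c-1) - (c-1)^2)*(y-1)^2 = 0 := by
      linear_combination (4*c*y) * hH
    rcases eq_or_lt_of_le hK with hK0 | hKpos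
    · exfalso
      have h1 : 4*c*y ≤ c - 1 := by nlinarith [mul_pos hc0 hy]
      nlinarith [mul_nonneg (mul_nonneg (by linarith : (0:ℝ) ≤ c - 1 - 4*c*y) hx.le) (by linarith : (0:ℝ) ≤ 1+3*c), mul_pos hx (mul_pos hc0 hc0), sq_nonneg (c+1), mul_pos hx hy, mul_pos (mul_pos hc0 hx) hx, mul_pos hc0 hy, mul_pos (mul_pos (mul_pos hc0 hx) hx) hy, mul_pos (mul_pos hx hy) hy]
    · have hy1 : y = 1 := by
        have h2 : (4*c*y*(x+c-1) - (c-1)^2)*(y-1)^2 ≤ 0 := by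
          nlinarith [sq_nonneg (2*c*y*(x-1) - (c-1)*(y-1))]
        have h3 : (y-1)^2 ≤ 0 := by
          rcases eq_or_lt_of_le (sq_nonneg (y-1)) with h | h
          · linarith [h.symm.le]
          · nlinarith
        have := sq_nonneg (y-1); nlinarith
      subst hy1
      have hx1 : c*(x-1)^2 = 0 := by linear_combination hH
      refine ⟨?_, rfl⟩
      have h4 : (x-1)^2 = 0 := by
        rcases mul_eq_zero.1 hx1 with h | h
        · exact absurd h (by positivity)
        · exact h
      have := sq_eq_zero_iff.1 h4; linarith
  · exfalso
    have h1 : 4*c*y ≤ c - 1 := by nlinarith [mul_pos hc0 hy]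
    nlinarith [mul_nonneg (mul_nonneg (by linarith : (0:ℝ) ≤ c - 1 - 4*c*y) hx.le) (by linarith : (0:ℝ) ≤ 1+3*c), mul_pos hx (mul_pos hc0 hc0), sq_nonneg (c+1), mul_pos hx hy, mul_pos (mul_pos hc0 hx) hx, mul_pos hc0 hy, mul_pos (mul_pos (mul_pos hc0 hx) hx) hy, mul_pos (mul_pos hx hy) hy]

/-- key identity: for `s ≤ t`, numerator minus `8(1-ρ)μ` times denominator equals `H(x,y)/μ`. -/
lemma keyid (ρ μ t s : ℝ) (hμ : μ ≠ 0) (hc : (1:ℝ) - 2*ρ ≠ 0) :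
    s*(1+μ*t)^2 - 2*ρ*s*(1+μ*t)*(1+μ*s) + t*(1+μ*s)^2 - 8*(1-ρ)*μ*(t*s - ρ^2*s^2)
      = (1/μ) * ((1-2*ρ)*(μ*t/(1-2*ρ)) + ((1-2*ρ)*(μ*s))
          + (1-2*ρ)*(μ*t/(1-2*ρ))^2*((1-2*ρ)*(μ*s)) + (μ*t/(1-2*ρ))*((1-2*ρ)*(μ*s))^2
          - (1+3*(1-2*ρ))*(μ*t/(1-2*ρ))*((1-2*ρ)*(μ*s))
          + ((1-2*ρ)-1)*((1-2*ρ)*(μ*s))^2) := by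
  field_simp
  ring

/-- lower bound in the case `s ≤ t`. -/
lemma lb_le (ρ μ t s : ℝ) (ht : 0 < t) (hs : 0 < s) (hst : s ≤ t)
    (hρl : -1 < ρ) (hρu : ρ < 0) (hμ : 0 < μ) :
    8 * (1 - ρ) * μ ≤ gfun ρ μ μ t s := by
  have hc1 : (1:ℝ) < 1 - 2*ρ := by linarith
  have hc : (1:ℝ) - 2*ρ ≠ 0 := by linarith
  have hmin : min t s = s := min_eq_right hst
  have hρ2 : ρ^2 < 1 := by nlinarith
  have hd : 0 < t*s - ρ^2*s^2 := by
    nlinarith [mul_pos hs hs, mul_le_mul_of_nonneg_right hst hs.le]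
  rw [gval ρ μ t s ht hs hρl hρu hμ, hmin, le_div_iff₀ hd]
  have hx : 0 < μ*t/(1-2*ρ) := by positivity
  have hy : 0 < (1-2*ρ)*(μ*s) := by positivity
  have hH := Hineq (1-2*ρ) (μ*t/(1-2*ρ)) ((1-2*ρ)*(μ*s)) hc1 hx hy
  have hkey := keyid ρ μ t s hμ.ne' hc
  nlinarith [mul_nonneg (by positivity : (0:ℝ) ≤ 1/μ) hH]

/-- equality case when `s ≤ t`. -/
lemma eq_case (ρ μ t s : ℝ) (ht : 0 < t) (hs : 0 < s) (hst : s ≤ t)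
    (hρl : -1 < ρ) (hρu : ρ < 0) (hμ : 0 < μ)
    (hg : gfun ρ μ μ t s = 8 * (1 - ρ) * μ) :
    t = (1 - 2*ρ)/μ ∧ s = 1/((1 - 2*ρ)*μ) := by
  have hc1 : (1:ℝ) < 1 - 2*ρ := by linarith
  have hc : (1:ℝ) - 2*ρ ≠ 0 := by linarith
  have hmin : min t s = s := min_eq_right hst
  have hρ2 : ρ^2 < 1 := by nlinarith
  have hd : 0 < t*s - ρ^2*s^2 := by
    nlinarith [mul_pos hs hs, mul_le_mul_of_nonneg_right hst hs.le]
  rw [gval ρ μ t s ht hs hρl hρu hμ, hmin, div_eq_iff hd.ne'] at hg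
  have hx : 0 < μ*t/(1-2*ρ) := by positivity
  have hy : 0 < (1-2*ρ)*(μ*s) := by positivity
  have hkey := keyid ρ μ t s hμ.ne' hc
  have hH0 : (1-2*ρ)*(μ*t/(1-2*ρ)) + ((1-2*ρ)*(μ*s))
      + (1-2*ρ)*(μ*t/(1-2*ρ))^2*((1-2*ρ)*(μ*s)) + (μ*t/(1-2*ρ))*((1-2*ρ)*(μ*s))^2
      - (1+3*(1-2*ρ))*(μ*t/(1-2*ρ))*((1-2*ρ)*(μ*s))
      + ((1-2*ρ)-1)*((1-2*ρ)*(μ*s))^2 = 0 := by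
    have hμ' : (0:ℝ) < 1/μ := by positivity
    have : (1/μ) * ((1-2*ρ)*(μ*t/(1-2*ρ)) + ((1-2*ρ)*(μ*s))
      + (1-2*ρ)*(μ*t/(1-2*ρ))^2*((1-2*ρ)*(μ*s)) + (μ*t/(1-2*ρ))*((1-2*ρ)*(μ*s))^2
      - (1+3*(1-2*ρ))*(μ*t/(1-2*ρ))*((1-2*ρ)*(μ*s))
      + ((1-2*ρ)-1)*((1-2*ρ)*(μ*s))^2) = 0 := by linarith
    exact (mul_eq_zero.1 this).resolve_left (by positivity)
  obtain ⟨hx1, hy1⟩ := Heq (1-2*ρ) _ _ hc1 hx hy hH0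
  constructor
  · field_simp at hx1 ⊢
    linarith
  · field_simp at hy1 ⊢
    linarith

lemma point_val (ρ μ : ℝ) (hρl : -1 < ρ) (hρu : ρ < 0) (hμ : 0 < μ) :
    gfun ρ μ μ ((1 - 2 * ρ) / μ) (1 / ((1 - 2 * ρ) * μ)) = 8 * (1 - ρ) * μ := by
  have hc1 : (1:ℝ) < 1 - 2*ρ := by linarith
  have hc0 : (0:ℝ) < 1 - 2*ρ := by linarith
  have ht : (0:ℝ) < (1 - 2*ρ)/μ := by positivity
  have hs : (0:ℝ) < 1/((1 - 2*ρ)*μ) := by positivity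
  have hst : 1/((1 - 2*ρ)*μ) ≤ (1 - 2*ρ)/μ := by
    rw [div_le_div_iff₀ (by positivity) hμ]
    nlinarith [mul_lt_mul_of_pos_right hc1 (mul_pos hc0 hμ), mul_lt_mul_of_pos_right hc1 hμ]
  have hρ2 : ρ^2 < 1 := by nlinarith
  have hmin : min ((1 - 2*ρ)/μ) (1/((1 - 2*ρ)*μ)) = 1/((1 - 2*ρ)*μ) := min_eq_right hst
  have hd : 0 < ((1 - 2*ρ)/μ)*(1/((1 - 2*ρ)*μ)) - ρ^2*(1/((1 - 2*ρ)*μ))^2 := by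
    nlinarith [mul_pos hs hs, mul_le_mul_of_nonneg_right hst hs.le]
  rw [show (1 - 2 * ρ) / μ = (1 - 2*ρ)/μ from rfl, show 1 / ((1 - 2 * ρ) * μ) = 1/((1 - 2*ρ)*μ) from rfl]
  rw [gval ρ μ _ _ ht hs hρl hρu hμ, hmin, div_eq_iff hd.ne']
  field_simp
  ring

theorem statement10 (ρ μ : ℝ) (hρl : -1 < ρ) (hρu : ρ < 0) (hμ : 0 < μ) :
    IsLeast {v : ℝ | ∃ t s : ℝ, 0 < t ∧ 0 < s ∧ v = gfun ρ μ μ t s}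
        (8 * (1 - ρ) * μ) ∧
      gfun ρ μ μ ((1 - 2 * ρ) / μ) (1 / ((1 - 2 * ρ) * μ)) = 8 * (1 - ρ) * μ ∧
      gfun ρ μ μ (1 / ((1 - 2 * ρ) * μ)) ((1 - 2 * ρ) / μ) = 8 * (1 - ρ) * μ ∧
      ∀ t s : ℝ, 0 < t → 0 < s → gfun ρ μ μ t s = 8 * (1 - ρ) * μ →
        (t = (1 - 2 * ρ) / μ ∧ s = 1 / ((1 - 2 * ρ) * μ)) ∨
          (t = 1 / ((1 - 2 * ρ) * μ) ∧ s = (1 - 2 * ρ) / μ) := by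
  have hc0 : (0:ℝ) < 1 - 2*ρ := by linarith
  have ht0 : (0:ℝ) < (1 - 2*ρ)/μ := by positivity
  have hs0 : (0:ℝ) < 1/((1 - 2*ρ)*μ) := by positivity
  have hpt := point_val ρ μ hρl hρu hμ
  have hpt2 : gfun ρ μ μ (1 / ((1 - 2 * ρ) * μ)) ((1 - 2 * ρ) / μ) = 8 * (1 - ρ) * μ := by
    rw [gsymm ρ μ _ _ hs0 ht0 hρl hρu hμ]; exact hpt
  refine ⟨⟨⟨(1 - 2*ρ)/μ, 1/((1 - 2*ρ)*μ), ht0, hs0, hpt.symm⟩, ?_⟩, hpt, hpt2, ?_⟩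
  · rintro v ⟨t, s, ht, hs, rfl⟩
    rcases le_total s t with hst | hst
    · exact lb_le ρ μ t s ht hs hst hρl hρu hμ
    · rw [gsymm ρ μ t s ht hs hρl hρu hμ]
      exact lb_le ρ μ s t hs ht hst hρl hρu hμ
  · intro t s ht hs hg
    rcases le_total s t with hst | hst
    · exact Or.inl (eq_case ρ μ t s ht hs hst hρl hρu hμ hg)
    · right
      rw [gsymm ρ μ t s ht hs hρl hρu hμ] at hg
      obtain ⟨h1, h2⟩ := eq_case ρ μ s t hs ht hst hρl hρu hμ hg
      exact ⟨h2, h1⟩
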